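/- arXiv:1703.08363 — 3 statements merged into one kernel-verified Lean document; each statement's English description precedes it below -/
import Mathlib

section
/- Let p be a prime and let P be a finite p-group with subgroups A and B such that P = AB (every element of P is a product ab with a ∈ A, b ∈ B). Suppose that p² does not divide the conjugacy class size |x^P| for every x ∈ A ∪ B. Then the derived subgroup P' is contained in the Frattini subgroup Φ(P), Φ(P) is contained in the center Z(P), P' is elementary abelian, and |P'| ≤ p². -/
open Pointwise

/-- The conjugacy class size of `x`: the index of its centralizer. -/
noncomputable def classSize {G : Type*} [Group G] (x : G) : ℕ := (Subgroup.centralizer {x}).index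

/-- `G = AB`: every element of the ambient group is a product of an element of `A`
and an element of `B`. -/
def IsFactorization {G : Type*} [Group G] (A B : Subgroup G) : Prop :=
  ∀ g : G, ∃ a ∈ A, ∃ b ∈ B, g = a * b

/-- `A` and `B` are mutually permutable: `A` permutes with every subgroup of `B`
and `B` permutes with every subgroup of `A`. -/
def MutuallyPermutable {G : Type*} [Group G] (A B : Subgroup G) : Prop :=
  (∀ X : Subgroup G, X ≤ B → (A : Set G) * (X : Set G) = (X : Set G) * (A : Set G)) ∧
  (∀ X : Subgroup G, X ≤ A → (B : Set G) * (X : Set G) = (X : Set G) * (B : Set G))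

/-- `x` has prime power order. -/
def HasPrimePowerOrder {G : Type*} [Group G] (x : G) : Prop :=
  ∃ q n : ℕ, q.Prime ∧ orderOf x = q ^ n

/-- `G` is `p`-nilpotent: it has a normal Hall `p'`-subgroup (a normal `p`-complement). -/
def IsPNilpotent (p : ℕ) (G : Type*) [Group G] : Prop :=
  ∃ H : Subgroup G, H.Normal ∧ ¬ p ∣ Nat.card H ∧ ∃ n : ℕ, H.index = p ^ n

/-- A group is elementary abelian (for the prime `p`) if it is abelian and every
nontrivial element has order `p`. -/
def IsElementaryAbelian (p : ℕ) (P : Type*) [Group P] : Prop :=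
  (∀ a b : P, a * b = b * a) ∧ ∀ a : P, a ≠ 1 → orderOf a = p

/-- `K` is the `p`-core `O_p(G)`: the largest normal `p`-subgroup of `G`. -/
def IsPCore (p : ℕ) {G : Type*} [Group G] (K : Subgroup G) : Prop :=
  K.Normal ∧ IsPGroup p K ∧ ∀ L : Subgroup G, L.Normal → IsPGroup p L → L ≤ K

/-- `F` is the Fitting subgroup of `G`: the largest normal nilpotent subgroup. -/
def IsFittingSubgroup {G : Type*} [Group G] (F : Subgroup G) : Prop :=
  F.Normal ∧ Group.IsNilpotent F ∧
    ∀ L : Subgroup G, L.Normal → Group.IsNilpotent L → L ≤ F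

/-- A group is supersoluble if it has a normal series all of whose factors are cyclic:
there is a monotone chain of normal subgroups from `⊥` to `⊤` such that each
`H (i+1)` is generated by `H i` together with a single element (i.e. each factor
`H (i+1) / H i` is cyclic). -/
def IsSupersoluble (G : Type*) [Group G] : Prop :=
  ∃ (n : ℕ) (H : Fin (n + 1) → Subgroup G),
    Monotone H ∧ H 0 = ⊥ ∧ H (Fin.last n) = ⊤ ∧ (∀ i, (H i).Normal) ∧
    ∀ i : Fin n, ∃ x ∈ H i.succ, H i.succ ≤ H i.castSucc ⊔ Subgroup.zpowers x

/-- A group is `p`-soluble if it has a normal series each of whose factors is either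
a `p`-group or a `p'`-group (the order of the factor `H (i+1) / H i` is the relative
index `(H i).relIndex (H (i+1))`). -/
def IsPSoluble (p : ℕ) (G : Type*) [Group G] : Prop :=
  ∃ (n : ℕ) (H : Fin (n + 1) → Subgroup G),
    Monotone H ∧ H 0 = ⊥ ∧ H (Fin.last n) = ⊤ ∧ (∀ i, (H i).Normal) ∧
    ∀ i : Fin n, (∃ k : ℕ, (H i.castSucc).relIndex (H i.succ) = p ^ k) ∨
      ¬ p ∣ (H i.castSucc).relIndex (H i.succ)

/-- A group is `p`-supersoluble if it has a normal series each of whose factors is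
either a `p'`-group or cyclic of order `p`. -/
def IsPSupersoluble (p : ℕ) (G : Type*) [Group G] : Prop :=
  ∃ (n : ℕ) (H : Fin (n + 1) → Subgroup G),
    Monotone H ∧ H 0 = ⊥ ∧ H (Fin.last n) = ⊤ ∧ (∀ i, (H i).Normal) ∧
    ∀ i : Fin n, (H i.castSucc).relIndex (H i.succ) = p ∨
      ¬ p ∣ (H i.castSucc).relIndex (H i.succ)

open scoped commutatorElement

section KnocheAux

open Subgroup

variable {P : Type*} [Group P]

private lemma knoche_central_comm {z : P} (hz : z ∈ Subgroup.center P) (g : P) :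
    g * z = z * g :=
  Subgroup.mem_center_iff.mp hz g

private lemma knoche_comm_mul_left (hZ : ∀ g h : P, ⁅g, h⁆ ∈ Subgroup.center P)
    (x x' y : P) : ⁅x * x', y⁆ = ⁅x', y⁆ * ⁅x, y⁆ := by
  have h1 : ⁅x * x', y⁆ = x * ⁅x', y⁆ * x⁻¹ * ⁅x, y⁆ := by
    simp only [commutatorElement_def]; group
  rw [h1, knoche_central_comm (hZ x' y) x]
  group

private lemma knoche_comm_mul_right (hZ : ∀ g h : P, ⁅g, h⁆ ∈ Subgroup.center P)
    (x y z : P) : ⁅x, y * z⁆ = ⁅x, y⁆ * ⁅x, z⁆ := by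
  have h1 : ⁅x, y * z⁆ = ⁅x, y⁆ * (y * ⁅x, z⁆ * y⁻¹) := by
    simp only [commutatorElement_def]; group
  rw [h1, knoche_central_comm (hZ x z) y]
  group

private def knochePhi (hZ : ∀ g h : P, ⁅g, h⁆ ∈ Subgroup.center P) (x : P) : P →* P where
  toFun y := ⁅x, y⁆
  map_one' := by simp
  map_mul' y z := knoche_comm_mul_right hZ x y z

@[simp] private lemma knochePhi_apply (hZ : ∀ g h : P, ⁅g, h⁆ ∈ Subgroup.center P)
    (x y : P) : knochePhi hZ x y = ⁅x, y⁆ := rfl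

private lemma knoche_eq_of_le_of_card_le [Finite P] {H K : Subgroup P}
    (h : H ≤ K) (hc : Nat.card K ≤ Nat.card H) : H = K := by
  apply SetLike.ext'
  apply Set.eq_of_subset_of_ncard_le h ?_ (Set.toFinite _)
  rwa [← Nat.card_coe_set_eq, ← Nat.card_coe_set_eq]

private lemma knoche_indep [Finite P] {p : ℕ} (hp : p.Prime) {c c' : P}
    (hoc : orderOf c = p) (hoc' : orderOf c' = p) (hnot : c' ∉ zpowers c) :
    ∀ w, w ∈ zpowers c → w ∈ zpowers c' → w = 1 := by
  intro w hw hw'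
  by_contra hw1
  have h1 : w ^ p = 1 := by
    obtain ⟨k, rfl⟩ := mem_zpowers_iff.mp hw'
    rw [← zpow_natCast, ← zpow_mul, mul_comm, zpow_mul, zpow_natCast, ← hoc',
      pow_orderOf_eq_one, one_zpow]
  have how : orderOf w = p := by
    rcases (Nat.dvd_prime hp).mp (orderOf_dvd_of_pow_eq_one h1) with h | h
    · exact absurd (orderOf_eq_one_iff.mp h) hw1
    · exact h
  have heq : zpowers w = zpowers c' := by
    apply knoche_eq_of_le_of_card_le (zpowers_le.mpr hw')
    rw [Nat.card_zpowers, Nat.card_zpowers, how, hoc']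
  have hc'w : c' ∈ zpowers w := by rw [heq]; exact mem_zpowers c'
  exact hnot (zpowers_le.mpr hw hc'w)

private lemma knoche_fact_symm {A B : Subgroup P} (hfact : IsFactorization A B) :
    IsFactorization B A := by
  intro g
  obtain ⟨a, ha, b, hb, hab⟩ := hfact g⁻¹
  exact ⟨b⁻¹, inv_mem hb, a⁻¹, inv_mem ha, by rw [← mul_inv_rev, ← hab, inv_inv]⟩

private lemma knoche_wbound [Finite P] {p : ℕ} (hp : p.Prime)
    (hZ : ∀ g h : P, ⁅g, h⁆ ∈ Subgroup.center P)
    {A B : Subgroup P} (hfact : IsFactorization A B)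
    (R1 : ∀ x : P, (x ∈ A ∨ x ∈ B) → ∀ y : P, ⁅x, y⁆ ≠ 1 → ∀ z : P, ⁅x, z⁆ ∈ zpowers ⁅x, y⁆)
    (E : ∀ x : P, (x ∈ A ∨ x ∈ B) → ∀ y : P, ⁅x, y⁆ ^ p = 1)
    {a y : P} (ha : a ∈ A) (hc : ⁅a, y⁆ ≠ 1) :
    ∀ a' ∈ A, ∀ y' : P, ⁅a', y'⁆ ∈ zpowers ⁅a, y⁆ := by
  haveI := Fact.mk hp
  intro a' ha' y'
  by_contra hnot
  have hc' : ⁅a', y'⁆ ≠ 1 := fun h => hnot (h ▸ one_mem _)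
  have hoc : orderOf ⁅a, y⁆ = p := orderOf_eq_prime (E a (Or.inl ha) y) hc
  have hoc' : orderOf ⁅a', y'⁆ = p := orderOf_eq_prime (E a' (Or.inl ha') y') hc'
  have indep := knoche_indep hp hoc hoc' hnot
  have Va : ∀ z : P, ⁅a, z⁆ ∈ zpowers ⁅a, y⁆ := R1 a (Or.inl ha) y hc
  have Va' : ∀ z : P, ⁅a', z⁆ ∈ zpowers ⁅a', y'⁆ := R1 a' (Or.inl ha') y' hc'
  have K1 : ∀ z : P, ⁅a, z⁆ ≠ 1 → ⁅a', z⁆ ≠ 1 := by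
    intro z hz hz'
    have haa : a' * a ∈ A := mul_mem ha' ha
    have h1 : ⁅a' * a, z⁆ = ⁅a, z⁆ := by
      rw [knoche_comm_mul_left hZ, hz', mul_one]
    have h2 : ⁅a' * a, z⁆ ≠ 1 := by rw [h1]; exact hz
    have h3 := R1 (a' * a) (Or.inl haa) z h2 y'
    rw [h1] at h3
    have h4 : ⁅a' * a, y'⁆ ∈ zpowers ⁅a, y⁆ := zpowers_le.mpr (Va z) h3
    have h5 : ⁅a', y'⁆ = ⁅a, y'⁆⁻¹ * ⁅a' * a, y'⁆ := by
      rw [knoche_comm_mul_left hZ]; group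
    exact hnot (h5 ▸ mul_mem (inv_mem (Va y')) h4)
  obtain ⟨x, hx, hax⟩ : ∃ x : P, (x ∈ A ∨ x ∈ B) ∧ ⁅a, x⁆ ≠ 1 := by
    by_contra hno
    push_neg at hno
    obtain ⟨α, hα, β, hβ, rfl⟩ := hfact y
    apply hc
    rw [knoche_comm_mul_right hZ, hno α (Or.inl hα), hno β (Or.inr hβ), mul_one]
  have hxa1 : ⁅x, a⁆ = ⁅a, x⁆⁻¹ := (commutatorElement_inv a x).symm
  have hxa : ⁅x, a⁆ ≠ 1 := by rw [hxa1]; exact inv_ne_one.mpr hax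
  have hxaZ : ⁅x, a⁆ ∈ zpowers ⁅a, y⁆ := by rw [hxa1]; exact inv_mem (Va x)
  have ha'x : ⁅a', x⁆ ≠ 1 := K1 x hax
  have hxa'1 : ⁅x, a'⁆ = ⁅a', x⁆⁻¹ := (commutatorElement_inv a' x).symm
  have hxa' : ⁅x, a'⁆ ≠ 1 := by rw [hxa'1]; exact inv_ne_one.mpr ha'x
  have h6 : ⁅x, a'⁆ ∈ zpowers ⁅a, y⁆ := zpowers_le.mpr hxaZ (R1 x hx a hxa a')
  have h7 : ⁅x, a'⁆ ∈ zpowers ⁅a', y'⁆ := by rw [hxa'1]; exact inv_mem (Va' x)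
  exact hxa' (indep _ h6 h7)

end KnocheAux

/-- Knoche's theorem for factorised `p`-groups. -/
theorem stmt_0 (p : ℕ) (hp : p.Prime) (P : Type*) [Group P] [Finite P]
    (hPgrp : IsPGroup p P) (A B : Subgroup P)
    (hfact : IsFactorization A B)
    (hclass : ∀ x : P, (x ∈ A ∨ x ∈ B) → ¬ p ^ 2 ∣ classSize x) :
    commutator P ≤ frattini P ∧ frattini P ≤ Subgroup.center P ∧
      IsElementaryAbelian p ↥(commutator P) ∧ Nat.card ↥(commutator P) ≤ p ^ 2 := by
  haveI := Fact.mk hp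
  classical
  have hidx : ∀ x : P, (x ∈ A ∨ x ∈ B) →
      (Subgroup.centralizer {x}).index = 1 ∨ (Subgroup.centralizer {x}).index = p := by
    intro x hx
    obtain ⟨n, hn⟩ := IsPGroup.iff_card.mp hPgrp
    have hdvd : (Subgroup.centralizer {x}).index ∣ p ^ n := by
      rw [← hn]; exact Subgroup.index_dvd_card (Subgroup.centralizer {x})
    obtain ⟨k, -, hek⟩ := (Nat.dvd_prime_pow hp).mp hdvd
    match k, hek with
    | 0, hek => exact Or.inl (by rw [hek, pow_zero])
    | 1, hek => exact Or.inr (by rw [hek, pow_one])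
    | (k+2), hek =>
      exact absurd (by rw [classSize, hek]; exact pow_dvd_pow p (by omega)) (hclass x hx)
  -- Step 1 : commutator ≤ frattini
  have h1 : commutator P ≤ frattini P := by
    have hcoatom : ∀ M : Subgroup P, IsCoatom M → commutator P ≤ M := by
      intro M hM
      haveI : Group.IsNilpotent P := IsPGroup.isNilpotent hPgrp
      haveI hMn : M.Normal :=
        Subgroup.NormalizerCondition.normal_of_coatom (hnc := normalizerCondition_of_isNilpotent) (hmax := hM)
      haveI : Nontrivial (P ⧸ M) := by
        obtain ⟨g, hg⟩ : ∃ g : P, g ∉ M := by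
          by_contra hall; push_neg at hall
          exact hM.1 ((Subgroup.eq_top_iff' M).mpr hall)
        exact nontrivial_of_ne (QuotientGroup.mk' M g) 1 (by simpa [QuotientGroup.eq_one_iff] using hg)
      have hQ : IsPGroup p (P ⧸ M) := hPgrp.to_quotient M
      have hcenter : Subgroup.center (P ⧸ M) ≠ ⊥ :=
        (Subgroup.nontrivial_iff_ne_bot _).mp hQ.center_nontrivial
      have hmapcomap := Subgroup.map_comap_eq_self_of_surjective
        (QuotientGroup.mk'_surjective M) (Subgroup.center (P ⧸ M))
      have hcomapM : M ≤ (Subgroup.center (P ⧸ M)).comap (QuotientGroup.mk' M) := by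
        intro m hm
        have h0 : QuotientGroup.mk' M m = 1 := (QuotientGroup.eq_one_iff m).mpr hm
        simp only [Subgroup.mem_comap, h0]
        exact one_mem _
      have hne : M ≠ (Subgroup.center (P ⧸ M)).comap (QuotientGroup.mk' M) := by
        intro heq
        apply hcenter
        calc Subgroup.center (P ⧸ M)
            = Subgroup.map (QuotientGroup.mk' M) ((Subgroup.center (P ⧸ M)).comap (QuotientGroup.mk' M)) := hmapcomap.symm
          _ = Subgroup.map (QuotientGroup.mk' M) M := by rw [← heq]
          _ = ⊥ := QuotientGroup.map_mk'_self M
      have htop : (Subgroup.center (P ⧸ M)).comap (QuotientGroup.mk' M) = ⊤ :=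
        hM.2 _ (lt_of_le_of_ne hcomapM hne)
      have hcentertop : Subgroup.center (P ⧸ M) = ⊤ := by
        rw [← hmapcomap, htop, ← MonoidHom.range_eq_map]
        exact MonoidHom.range_eq_top_of_surjective _ (QuotientGroup.mk'_surjective M)
      rw [commutator_def]
      apply Subgroup.commutator_le.mpr
      intro g _ h _
      have hone : QuotientGroup.mk' M ⁅g, h⁆ = 1 := by
        rw [map_commutatorElement, commutatorElement_eq_one_iff_mul_comm]
        have hmem : QuotientGroup.mk' M h ∈ Subgroup.center (P ⧸ M) := hcentertop ▸ Subgroup.mem_top _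
        exact Subgroup.mem_center_iff.mp hmem (QuotientGroup.mk' M g)
      exact (QuotientGroup.eq_one_iff _).mp hone
    show commutator P ≤ Order.radical (Subgroup P)
    rw [Order.radical]
    exact le_iInf₂ fun M hM => hcoatom M hM
  -- Step 2 : frattini ≤ center
  have hfrat_cent : ∀ x : P, (x ∈ A ∨ x ∈ B) →
      frattini P ≤ Subgroup.centralizer {x} := by
    intro x hx
    rcases hidx x hx with h | h
    · rw [Subgroup.index_eq_one] at h; rw [h]; exact le_top
    · apply frattini_le_coatom
      refine ⟨?_, ?_⟩
      · intro htop; rw [htop, Subgroup.index_top] at h; exact hp.one_lt.ne h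
      · intro K hK
        have hdvd : K.index ∣ p := h ▸ Subgroup.index_dvd_of_le hK.le
        rcases (Nat.dvd_prime hp).mp hdvd with h1' | h1'
        · exact Subgroup.index_eq_one.mp h1'
        · exfalso
          have hcard : Nat.card (Subgroup.centralizer ({x} : Set P)) = Nat.card K := by
            have e1 := Subgroup.card_mul_index (Subgroup.centralizer ({x} : Set P))
            have e2 := Subgroup.card_mul_index K
            rw [h] at e1; rw [h1'] at e2
            exact Nat.eq_of_mul_eq_mul_right hp.pos (e1.trans e2.symm)
          exact hK.ne (knoche_eq_of_le_of_card_le hK.le hcard.ge)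
  have h2 : frattini P ≤ Subgroup.center P := by
    intro z hz
    rw [Subgroup.mem_center_iff]
    intro g
    obtain ⟨a, ha, b, hb, rfl⟩ := hfact g
    have hza : a * z = z * a :=
      Subgroup.mem_centralizer_iff.mp (hfrat_cent a (Or.inl ha) hz) a (Set.mem_singleton a)
    have hzb : b * z = z * b :=
      Subgroup.mem_centralizer_iff.mp (hfrat_cent b (Or.inr hb) hz) b (Set.mem_singleton b)
    rw [mul_assoc, hzb, ← mul_assoc, hza, mul_assoc]
  have hZ : ∀ g h : P, ⁅g, h⁆ ∈ Subgroup.center P := by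
    intro g h
    apply h2; apply h1
    rw [commutator_def]
    exact Subgroup.commutator_mem_commutator (Subgroup.mem_top g) (Subgroup.mem_top h)
  have hker : ∀ x : P, (knochePhi hZ x).ker = Subgroup.centralizer {x} := by
    intro x
    ext z
    rw [MonoidHom.mem_ker, Subgroup.mem_centralizer_iff, knochePhi_apply]
    constructor
    · intro hz w hw
      rw [Set.mem_singleton_iff] at hw; subst hw
      exact commutatorElement_eq_one_iff_mul_comm.mp hz
    · intro hz
      exact commutatorElement_eq_one_iff_mul_comm.mpr (hz x (Set.mem_singleton x))
  have hcardrange : ∀ x : P, (x ∈ A ∨ x ∈ B) →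
      Nat.card (knochePhi hZ x).range = 1 ∨ Nat.card (knochePhi hZ x).range = p := by
    intro x hx
    rw [← Subgroup.index_ker, hker x]
    exact hidx x hx
  have E : ∀ x : P, (x ∈ A ∨ x ∈ B) → ∀ y : P, ⁅x, y⁆ ^ p = 1 := by
    intro x hx y
    have hmem : ⁅x, y⁆ ∈ (knochePhi hZ x).range := ⟨y, rfl⟩
    have hpow : ⁅x, y⁆ ^ (Nat.card (knochePhi hZ x).range) = 1 := by
      have h0 := pow_card_eq_one' (G := (knochePhi hZ x).range) (x := ⟨⁅x, y⁆, hmem⟩)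
      have h2' := congrArg (Subtype.val) h0
      simpa using h2'
    rcases hcardrange x hx with h | h
    · rw [h, pow_one] at hpow; rw [hpow, one_pow]
    · rwa [h] at hpow
  have R1 : ∀ x : P, (x ∈ A ∨ x ∈ B) → ∀ y : P, ⁅x, y⁆ ≠ 1 →
      ∀ z : P, ⁅x, z⁆ ∈ Subgroup.zpowers ⁅x, y⁆ := by
    intro x hx y hxy z
    have hmem : ⁅x, y⁆ ∈ (knochePhi hZ x).range := ⟨y, rfl⟩
    have hle : Subgroup.zpowers ⁅x, y⁆ ≤ (knochePhi hZ x).range :=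
      Subgroup.zpowers_le.mpr hmem
    have hcard : Nat.card (knochePhi hZ x).range = p := by
      rcases hcardrange x hx with h | h
      · exfalso
        have hbot : (knochePhi hZ x).range = ⊥ := Subgroup.card_eq_one.mp h
        rw [hbot] at hmem
        exact hxy (Subgroup.mem_bot.mp hmem)
      · exact h
    have hoc : orderOf ⁅x, y⁆ = p := orderOf_eq_prime (E x hx y) hxy
    have heq : Subgroup.zpowers ⁅x, y⁆ = (knochePhi hZ x).range := by
      apply knoche_eq_of_le_of_card_le hle
      rw [hcard, Nat.card_zpowers, hoc]
    rw [heq]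
    exact ⟨z, rfl⟩
  have claim : ∀ (A' B' : Subgroup P), IsFactorization A' B' →
      (∀ x : P, (x ∈ A' ∨ x ∈ B') → ∀ y : P, ⁅x, y⁆ ≠ 1 →
        ∀ z : P, ⁅x, z⁆ ∈ Subgroup.zpowers ⁅x, y⁆) →
      (∀ x : P, (x ∈ A' ∨ x ∈ B') → ∀ y : P, ⁅x, y⁆ ^ p = 1) →
      ∃ c : P, c ∈ Subgroup.center P ∧ c ^ p = 1 ∧
        ∀ a ∈ A', ∀ y : P, ⁅a, y⁆ ∈ Subgroup.zpowers c := by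
    intro A' B' hfact' R1' E'
    by_cases hall : ∀ a ∈ A', ∀ y : P, ⁅a, y⁆ = 1
    · exact ⟨1, one_mem _, one_pow p,
        fun a ha y => by rw [hall a ha y]; exact one_mem _⟩
    · push_neg at hall
      obtain ⟨a₀, ha₀, y₀, hy₀⟩ := hall
      exact ⟨⁅a₀, y₀⁆, hZ a₀ y₀, E' a₀ (Or.inl ha₀) y₀,
        knoche_wbound hp hZ hfact' R1' E' ha₀ hy₀⟩
  obtain ⟨c, hcZ, hcp, hcA⟩ := claim A B hfact R1 E
  obtain ⟨d, hdZ, hdp, hdB⟩ := claim B A (knoche_fact_symm hfact)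
    (fun x hx => R1 x hx.symm) (fun x hx => E x hx.symm)
  have hsup : commutator P ≤ Subgroup.zpowers c ⊔ Subgroup.zpowers d := by
    rw [commutator_def]
    apply Subgroup.commutator_le.mpr
    intro g _ h _
    obtain ⟨α, hα, β, hβ, rfl⟩ := hfact g
    rw [knoche_comm_mul_left hZ]
    exact mul_mem (Subgroup.mem_sup_right (hdB β hβ h)) (Subgroup.mem_sup_left (hcA α hα h))
  have hpowgen : ∀ e : P, e ^ p = 1 → ∀ w ∈ Subgroup.zpowers e, w ^ p = 1 := by
    intro e he w hw
    obtain ⟨k, rfl⟩ := Subgroup.mem_zpowers_iff.mp hw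
    rw [← zpow_natCast, ← zpow_mul, mul_comm, zpow_mul, zpow_natCast, he, one_zpow]
  let T' : Subgroup P :=
    { carrier := {x : P | x ∈ Subgroup.center P ∧ x ^ p = 1}
      one_mem' := ⟨one_mem _, one_pow p⟩
      mul_mem' := by
        rintro x y ⟨hx, hx1⟩ ⟨hy, hy1⟩
        refine ⟨mul_mem hx hy, ?_⟩
        rw [(show Commute x y from (Subgroup.mem_center_iff.mp hx y).symm).mul_pow,
          hx1, hy1, one_mul]
      inv_mem' := by
        rintro x ⟨hx, hx1⟩
        exact ⟨inv_mem hx, by rw [inv_pow, hx1, inv_one]⟩ }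
  have hT : ∀ w ∈ commutator P, w ∈ Subgroup.center P ∧ w ^ p = 1 := by
    intro w hw
    have hsub : Subgroup.zpowers c ⊔ Subgroup.zpowers d ≤ T' := by
      apply sup_le
      · intro u hu
        exact ⟨Subgroup.zpowers_le.mpr hcZ hu, hpowgen c hcp u hu⟩
      · intro u hu
        exact ⟨Subgroup.zpowers_le.mpr hdZ hu, hpowgen d hdp u hu⟩
    exact hsub (hsup hw)
  refine ⟨h1, h2, ⟨?_, ?_⟩, ?_⟩
  · intro u v
    have hu : (u : P) ∈ Subgroup.center P := (hT _ u.2).1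
    exact Subtype.ext (Subgroup.mem_center_iff.mp hu (v : P)).symm
  · intro u hu
    have h1' : (u : P) ^ p = 1 := (hT _ u.2).2
    have hne : (u : P) ≠ 1 := fun h => hu (Subtype.ext h)
    rw [← Subgroup.orderOf_coe u]
    exact orderOf_eq_prime h1' hne
  · have hcd : Subgroup.zpowers c ≤ Subgroup.center P := Subgroup.zpowers_le.mpr hcZ
    have hswap : ∀ a b e f : P, b * e = e * b → (a * b) * (e * f) = (a * e) * (b * f) := by
      intro a b e f hbe
      rw [mul_assoc, ← mul_assoc b e f, hbe, mul_assoc e b f, ← mul_assoc]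
    let ψ : (Subgroup.zpowers c) × (Subgroup.zpowers d) →* P :=
      { toFun := fun u => (u.1 : P) * (u.2 : P)
        map_one' := by simp
        map_mul' := by
          rintro ⟨u, v⟩ ⟨u', v'⟩
          simp only [Prod.mk_mul_mk, Subgroup.coe_mul]
          exact hswap _ _ _ _ (Subgroup.mem_center_iff.mp (hcd u'.2) (v : P)).symm }
    have hψrange : Subgroup.zpowers c ⊔ Subgroup.zpowers d ≤ ψ.range := by
      apply sup_le
      · intro w hw
        exact ⟨(⟨w, hw⟩, 1), by simp [ψ]⟩
      · intro w hw
        exact ⟨(1, ⟨w, hw⟩), by simp [ψ]⟩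
    calc Nat.card ↥(commutator P) ≤ Nat.card ↥(ψ.range) :=
          Subgroup.card_le_of_le (le_trans hsup hψrange)
      _ ≤ Nat.card ((Subgroup.zpowers c) × (Subgroup.zpowers d)) :=
          Nat.card_le_card_of_surjective ψ.rangeRestrict ψ.rangeRestrict_surjective
      _ = orderOf c * orderOf d := by
          rw [Nat.card_prod, Nat.card_zpowers, Nat.card_zpowers]
      _ ≤ p * p := Nat.mul_le_mul
          (Nat.le_of_dvd hp.pos (orderOf_dvd_of_pow_eq_one hcp))
          (Nat.le_of_dvd hp.pos (orderOf_dvd_of_pow_eq_one hdp))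
      _ = p ^ 2 := (sq p).symm
end

section
/- Let G be a finite group, p a prime, and N an abelian minimal normal subgroup of G whose order is not divisible by p. Let K be the normal subgroup of G containing N·O_p(G) with K/(N·O_p(G)) = O_p(G/(N·O_p(G))), and suppose K/(N·O_p(G)) has order p. If P is a Sylow p-subgroup of K, then the centralizer of P in N is trivial, i.e. C_N(P) = 1. -/
open Pointwise

private lemma aux_cent_le_norm {G : Type*} [Group G] (H : Subgroup G) :
    Subgroup.centralizer (H : Set G) ≤ Subgroup.normalizer (H : Set G) := by
  intro g hg
  rw [Subgroup.mem_normalizer_iff]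
  intro h
  constructor
  · intro hh
    have hc : h * g = g * h := Subgroup.mem_centralizer_iff.mp hg h hh
    have : g * h * g⁻¹ = h := by rw [← hc]; group
    rwa [this]
  · intro hh
    have hc : (g * h * g⁻¹) * g = g * (g * h * g⁻¹) :=
      Subgroup.mem_centralizer_iff.mp hg _ hh
    have key : h = g * h * g⁻¹ := by
      calc h = g⁻¹ * ((g * h * g⁻¹) * g) := by group
        _ = g⁻¹ * (g * (g * h * g⁻¹)) := by rw [hc]
        _ = g * h * g⁻¹ := by group
    exact key ▸ hh

/-- Proposition (2): if `K/(N·O_p(G)) = O_p(G/(N·O_p(G)))` has order `p`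
and `P` is a Sylow `p`-subgroup of `K`, then `C_N(P) = 1`. -/
theorem stmt_12 {G : Type*} [Group G] [Finite G] (p : ℕ) (hp : p.Prime)
    (N : Subgroup G) [N.Normal]
    (hNmin : N ≠ ⊥ ∧ ∀ L : Subgroup G, L.Normal → L ≤ N → L = ⊥ ∨ L = N)
    (hNab : ∀ a b : ↥N, a * b = b * a)
    (hNp' : ¬ p ∣ Nat.card ↥N)
    (Op : Subgroup G) [Op.Normal] (hOp : IsPCore p Op)
    (K : Subgroup G) [K.Normal] (hNOpK : N ⊔ Op ≤ K)
    (hKcore : IsPCore p (K.map (QuotientGroup.mk' (N ⊔ Op))))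
    (hKord : Nat.card ↥(K.map (QuotientGroup.mk' (N ⊔ Op))) = p)
    (P : Sylow p ↥K) :
    ∀ x : G, x ∈ N →
      x ∈ Subgroup.centralizer ((Subgroup.map K.subtype (P : Subgroup ↥K) : Subgroup G) : Set G) →
      x = 1 := by
  
  haveI : Fact p.Prime := ⟨hp⟩
  haveI : Finite (Sylow p ↥K) :=
    Finite.of_injective (fun S : Sylow p ↥K => ((S : Subgroup ↥K) : Set ↥K))
      (fun S T h => Sylow.ext (SetLike.coe_injective h))
  set Q : Subgroup G := Subgroup.map K.subtype (P : Subgroup ↥K) with hQdef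
  have hQK : Q ≤ K := Subgroup.map_subtype_le _
  have hOpK : Op ≤ K := le_trans le_sup_right hNOpK
  have hQp : IsPGroup p Q := P.2.map K.subtype
  -- Op ≤ Q
  have hOp'p : IsPGroup p (Op.subgroupOf K) :=
    hOp.2.1.of_equiv (Subgroup.subgroupOfEquivOfLe hOpK).symm
  have hOp'P : Op.subgroupOf K ≤ (P : Subgroup ↥K) := by
    obtain ⟨R, hR⟩ := hOp'p.exists_le_sylow
    obtain ⟨g, hg⟩ := MulAction.exists_smul_eq (↥K) R P
    calc Op.subgroupOf K = MulAut.conj g • Op.subgroupOf K :=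
          (Subgroup.Normal.conj_smul_eq_self g _).symm
      _ ≤ MulAut.conj g • (R : Subgroup ↥K) :=
          Subgroup.pointwise_smul_le_pointwise_smul_iff.mpr hR
      _ = ((g • R : Sylow p ↥K) : Subgroup ↥K) := rfl
      _ = (P : Subgroup ↥K) := by rw [hg]
  have hOpQ : Op ≤ Q := by
    intro x hx
    exact ⟨⟨x, hOpK hx⟩, hOp'P (by simpa [Subgroup.mem_subgroupOf] using hx), rfl⟩
  -- Q is not contained in N ⊔ Op
  have hQnotle : ¬ Q ≤ N ⊔ Op := by
    intro hle
    have hPle : (P : Subgroup ↥K) ≤ (N ⊔ Op).subgroupOf K := by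
      intro x hx
      simpa [Subgroup.mem_subgroupOf] using hle ⟨x, hx, rfl⟩
    have h1 : ((N ⊔ Op).subgroupOf K).index ∣ (P : Subgroup ↥K).index :=
      Subgroup.index_dvd_of_le hPle
    have h2 : ((N ⊔ Op).subgroupOf K).index
        = Nat.card ↥(K.map (QuotientGroup.mk' (N ⊔ Op))) := by
      set f := (QuotientGroup.mk' (N ⊔ Op)).comp K.subtype with hf
      have hker : f.ker = (N ⊔ Op).subgroupOf K := by
        rw [hf, ← MonoidHom.comap_ker, QuotientGroup.ker_mk']
        rfl
      have hrange : f.range = K.map (QuotientGroup.mk' (N ⊔ Op)) := by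
        rw [hf, MonoidHom.range_comp, Subgroup.range_subtype]
      rw [← hker, Subgroup.index_eq_card, ← hrange]
      exact Nat.card_congr (QuotientGroup.quotientKerEquivRange f).toEquiv
    rw [hKord] at h2
    exact P.not_dvd_index (h2 ▸ h1)
  -- K ≤ N ⊔ Q
  have hKNQ : K ≤ N ⊔ Q := by
    have hmapQK : Q.map (QuotientGroup.mk' (N ⊔ Op))
        = K.map (QuotientGroup.mk' (N ⊔ Op)) := by
      refine Subgroup.eq_of_le_of_card_ge (Subgroup.map_mono hQK) ?_
      have hdvd : Nat.card ↥(Q.map (QuotientGroup.mk' (N ⊔ Op)))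
          ∣ Nat.card ↥(K.map (QuotientGroup.mk' (N ⊔ Op))) :=
        Subgroup.card_dvd_of_le (Subgroup.map_mono hQK)
      rw [hKord] at hdvd ⊢
      rcases (Nat.Prime.eq_one_or_self_of_dvd hp _ hdvd) with h | h
      · exfalso
        apply hQnotle
        have : Q.map (QuotientGroup.mk' (N ⊔ Op)) = ⊥ := Subgroup.card_eq_one.mp h
        have := (Subgroup.map_eq_bot_iff _).mp this
        rwa [QuotientGroup.ker_mk'] at this
      · exact h.ge
    have h1 : K ≤ Subgroup.comap (QuotientGroup.mk' (N ⊔ Op))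
        (Q.map (QuotientGroup.mk' (N ⊔ Op))) := by
      rw [hmapQK]; exact Subgroup.le_comap_map _ _
    rw [Subgroup.comap_map_eq, QuotientGroup.ker_mk'] at h1
    refine h1.trans (sup_le le_sup_right (sup_le le_sup_left (hOpQ.trans le_sup_right)))
  -- Frattini
  have htop : Subgroup.normalizer (Q : Set G) ⊔ K = ⊤ := Sylow.normalizer_sup_eq_top (N := K) P
  -- the centralizer intersection
  set C : Subgroup G := Subgroup.centralizer (Q : Set G) ⊓ N with hCdef
  have hNcent : N ≤ Subgroup.centralizer (C : Set G) := by
    intro n hn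
    rw [Subgroup.mem_centralizer_iff]
    intro h hh
    have hhN : h ∈ N := hh.2
    have := hNab ⟨h, hhN⟩ ⟨n, hn⟩
    exact congrArg Subtype.val this
  have hQcent : Q ≤ Subgroup.centralizer (C : Set G) := by
    intro q hq
    rw [Subgroup.mem_centralizer_iff]
    intro h hh
    exact (Subgroup.mem_centralizer_iff.mp hh.1 q hq).symm
  have hKnorm : K ≤ Subgroup.normalizer (C : Set G) :=
    hKNQ.trans (sup_le (hNcent.trans (aux_cent_le_norm C))
      (hQcent.trans (aux_cent_le_norm C)))
  have claim : ∀ g ∈ Subgroup.normalizer (Q : Set G), ∀ c ∈ C, g * c * g⁻¹ ∈ C := by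
    intro g hg c hc
    refine Subgroup.mem_inf.mpr ⟨?_, ?_⟩
    · rw [Subgroup.mem_centralizer_iff]
      intro q hq
      have hq' : g⁻¹ * q * g ∈ Q := by
        refine (Subgroup.mem_normalizer_iff.mp hg (g⁻¹ * q * g)).mpr ?_
        have : g * (g⁻¹ * q * g) * g⁻¹ = q := by group
        rwa [this]
      have hcq : (g⁻¹ * q * g) * c = c * (g⁻¹ * q * g) :=
        Subgroup.mem_centralizer_iff.mp hc.1 _ hq'
      calc q * (g * c * g⁻¹) = g * ((g⁻¹ * q * g) * c) * g⁻¹ := by group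
        _ = g * (c * (g⁻¹ * q * g)) * g⁻¹ := by rw [hcq]
        _ = (g * c * g⁻¹) * q := by group
    · exact (inferInstance : N.Normal).conj_mem c hc.2 g
  have hNQnorm : Subgroup.normalizer (Q : Set G) ≤ Subgroup.normalizer (C : Set G) := by
    intro g hg
    rw [Subgroup.mem_normalizer_iff]
    intro h
    constructor
    · exact claim g hg h
    · intro hh
      have := claim g⁻¹ ((Subgroup.normalizer (Q : Set G)).inv_mem hg) _ hh
      have key : g⁻¹ * (g * h * g⁻¹) * g⁻¹⁻¹ = h := by group
      rwa [key] at this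
  have hCnormal : C.Normal := by
    rw [← Subgroup.normalizer_eq_top_iff]
    exact le_antisymm le_top (htop ▸ sup_le hNQnorm hKnorm)
  rcases hNmin.2 C hCnormal inf_le_right with hbot | hCN
  · intro x hxN hxc
    have hx : x ∈ C := Subgroup.mem_inf.mpr ⟨hxc, hxN⟩
    rw [hbot] at hx
    exact Subgroup.mem_bot.mp hx
  · exfalso
    have hNcentQ : N ≤ Subgroup.centralizer (Q : Set G) := hCN ▸ inf_le_left
    have hQtop : Subgroup.normalizer (Q : Set G) = ⊤ := by
      refine le_antisymm le_top ?_
      rw [← htop]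
      exact sup_le le_rfl (hKNQ.trans
        (sup_le (hNcentQ.trans (aux_cent_le_norm Q)) Subgroup.le_normalizer))
    have hQnormal : Q.Normal := Subgroup.normalizer_eq_top_iff.mp hQtop
    have hQOp : Q ≤ Op := hOp.2.2 Q hQnormal hQp
    have hKbot : K.map (QuotientGroup.mk' (N ⊔ Op)) = ⊥ := by
      rw [Subgroup.map_eq_bot_iff, QuotientGroup.ker_mk']
      exact hKNQ.trans (sup_le le_sup_left (hQOp.trans le_sup_right))
    rw [hKbot, Subgroup.card_bot] at hKord
    exact hp.one_lt.ne hKord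
end

section
/- Let G be a finite group with subgroups A and B such that G = AB, let p be a prime, and assume G is p-nilpotent. Suppose that p² does not divide the conjugacy class size |x^G| for every p-element x ∈ A ∪ B. If P is a Sylow p-subgroup of G, then the derived subgroup P' is contained in the Frattini subgroup Φ(P), Φ(P) is contained in the center Z(P), and P' is elementary abelian of order at most p². -/
open Pointwise
open scoped commutatorElement

namespace Stmt14

variable {Q : Type*} [Group Q]

/-- The commutator map `g ↦ ⁅x, g⁆` as a monoid hom, when all commutators are central. -/
def commHom (hc : commutator Q ≤ Subgroup.center Q) (x : Q) : Q →* Q where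
  toFun g := ⁅x, g⁆
  map_one' := by simp [commutatorElement_def]
  map_mul' g h := by
    have hcent : ⁅x, h⁆ ∈ Subgroup.center Q :=
      hc (Subgroup.commutator_mem_commutator (Subgroup.mem_top x) (Subgroup.mem_top h))
    have h1 : g * ⁅x, h⁆ = ⁅x, h⁆ * g := (Subgroup.mem_center_iff.mp hcent g)
    have key : ⁅x, g * h⁆ = ⁅x, g⁆ * (g * ⁅x, h⁆ * g⁻¹) := by
      simp only [commutatorElement_def]; group
    show ⁅x, g * h⁆ = ⁅x, g⁆ * ⁅x, h⁆
    rw [key, h1]; group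

lemma commHom_apply (hc : commutator Q ≤ Subgroup.center Q) (x g : Q) :
    commHom hc x g = ⁅x, g⁆ := rfl

lemma ker_commHom (hc : commutator Q ≤ Subgroup.center Q) (x : Q) :
    (commHom hc x).ker = Subgroup.centralizer {x} := by
  ext g
  simp only [MonoidHom.mem_ker, commHom_apply, Subgroup.mem_centralizer_singleton_iff,
    commutatorElement_eq_one_iff_mul_comm]
  exact ⟨fun h => h.symm, fun h => h.symm⟩

lemma card_range_commHom (hc : commutator Q ≤ Subgroup.center Q) (x : Q) :
    Nat.card (commHom hc x).range = (Subgroup.centralizer {x}).index := by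
  rw [← Subgroup.index_ker, ker_commHom]

lemma range_commHom_le_center (hc : commutator Q ≤ Subgroup.center Q) (x : Q) :
    (commHom hc x).range ≤ Subgroup.center Q := by
  rintro - ⟨g, rfl⟩
  exact hc (Subgroup.commutator_mem_commutator (Subgroup.mem_top x) (Subgroup.mem_top g))

end Stmt14

namespace Stmt14

variable {Q : Type*} [Group Q]

lemma comm_mul_left (hc : commutator Q ≤ Subgroup.center Q) (x y g : Q) :
    ⁅x * y, g⁆ = ⁅y, g⁆ * ⁅x, g⁆ := by
  have hcent : ⁅y, g⁆ ∈ Subgroup.center Q :=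
    hc (Subgroup.commutator_mem_commutator (Subgroup.mem_top y) (Subgroup.mem_top g))
  have h1 : x * ⁅y, g⁆ = ⁅y, g⁆ * x := (Subgroup.mem_center_iff.mp hcent x)
  have key : ⁅x * y, g⁆ = x * ⁅y, g⁆ * x⁻¹ * ⁅x, g⁆ := by
    simp only [commutatorElement_def]; group
  rw [key, h1]; group

lemma eq_zpowers_of_card_dvd_prime [Finite Q] {p : ℕ} (hp : p.Prime) {U : Subgroup Q}
    (hU : Nat.card U ∣ p) {z : Q} (hz1 : z ≠ 1) (hzU : z ∈ U) : U = Subgroup.zpowers z := by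
  have hle : Subgroup.zpowers z ≤ U := Subgroup.zpowers_le.mpr hzU
  have hcard : Nat.card (Subgroup.zpowers z) = orderOf z := Nat.card_zpowers z
  have hdvd : orderOf z ∣ p := (hcard ▸ Subgroup.card_dvd_of_le hle).trans hU
  have hoz : orderOf z = p := by
    rcases (Nat.Prime.eq_one_or_self_of_dvd hp _ hdvd) with h | h
    · exact absurd (orderOf_eq_one_iff.mp h) hz1
    · exact h
  have hUle : Nat.card U ≤ orderOf z := hoz ▸ Nat.le_of_dvd hp.pos hU
  exact (Subgroup.eq_of_le_of_card_ge hle (hcard ▸ hUle)).symm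

lemma sub_eq_of_common [Finite Q] {p : ℕ} (hp : p.Prime) {U V : Subgroup Q}
    (hU : Nat.card U ∣ p) (hV : Nat.card V ∣ p) {z : Q} (hz1 : z ≠ 1)
    (hzU : z ∈ U) (hzV : z ∈ V) : U = V := by
  rw [eq_zpowers_of_card_dvd_prime hp hU hz1 hzU, eq_zpowers_of_card_dvd_prime hp hV hz1 hzV]

end Stmt14

namespace Stmt14

variable {Q : Type*} [Group Q]

lemma K_eq_K [Finite Q] {p : ℕ} (hp : p.Prime) (hc : commutator Q ≤ Subgroup.center Q)
    {S T : Subgroup Q} (hfac : ∀ g : Q, ∃ a ∈ S, ∃ b ∈ T, g = a * b)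
    (hidx : ∀ x : Q, (x ∈ S ∨ x ∈ T) → (Subgroup.centralizer {x}).index ∣ p)
    {R : Subgroup Q} (hR : R = S ∨ R = T)
    {x y : Q} (hx : x ∈ R) (hy : y ∈ R)
    (hKx : (commHom hc x).range ≠ ⊥) (hKy : (commHom hc y).range ≠ ⊥) :
    (commHom hc x).range = (commHom hc y).range := by
  have memR : ∀ w ∈ R, w ∈ S ∨ w ∈ T := by
    rcases hR with h | h
    · exact fun w hw => Or.inl (h ▸ hw)
    · exact fun w hw => Or.inr (h ▸ hw)
  set Kx := (commHom hc x).range with hKxdef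
  set Ky := (commHom hc y).range with hKydef
  set Kxy := (commHom hc (x * y)).range with hKxydef
  have cardK : ∀ w : Q, (w ∈ S ∨ w ∈ T) → Nat.card (commHom hc w).range ∣ p :=
    fun w hw => (card_range_commHom hc w) ▸ hidx w hw
  have cKx : Nat.card Kx ∣ p := cardK x (memR x hx)
  have cKy : Nat.card Ky ∣ p := cardK y (memR y hy)
  have cKxy : Nat.card Kxy ∣ p := cardK (x * y) (memR _ (mul_mem hx hy))
  by_contra hne
  -- centralizers have index exactly p (nontrivial ranges)
  have idx_eq : ∀ w : Q, (commHom hc w).range ≠ ⊥ →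
      (Subgroup.centralizer {w}).index = Nat.card (commHom hc w).range := fun w _ =>
    (card_range_commHom hc w).symm
  have cardKx_ne : Nat.card Kx ≠ 1 := fun h => hKx (Subgroup.card_eq_one.mp h)
  have cardKy_ne : Nat.card Ky ≠ 1 := fun h => hKy (Subgroup.card_eq_one.mp h)
  have cardKx_eq : Nat.card Kx = p := ((Nat.Prime.eq_one_or_self_of_dvd hp _ cKx).resolve_left cardKx_ne)
  have cardKy_eq : Nat.card Ky = p := ((Nat.Prime.eq_one_or_self_of_dvd hp _ cKy).resolve_left cardKy_ne)
  have idxx : (Subgroup.centralizer {x}).index = p := by rw [idx_eq x hKx, cardKx_eq]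
  have idxy : (Subgroup.centralizer {y}).index = p := by rw [idx_eq y hKy, cardKy_eq]
  -- membership of commutators in ranges
  have memKx : ∀ g : Q, ⁅x, g⁆ ∈ Kx := fun g => ⟨g, rfl⟩
  have memKy : ∀ g : Q, ⁅y, g⁆ ∈ Ky := fun g => ⟨g, rfl⟩
  by_cases hC : Subgroup.centralizer {x} = Subgroup.centralizer {y}
  · -- find w ∈ S ∪ T outside the common centralizer
    have hCne : Subgroup.centralizer {x} ≠ ⊤ := by
      intro h
      rw [h, Subgroup.index_top] at idxx
      exact hp.one_lt.ne' idxx.symm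
    obtain ⟨g, hg⟩ : ∃ g : Q, g ∉ Subgroup.centralizer {x} := by
      by_contra h
      push_neg at h
      exact hCne ((Subgroup.eq_top_iff' _).mpr h)
    obtain ⟨a, ha, b, hb, rfl⟩ := hfac g
    have hw : ∃ w : Q, (w ∈ S ∨ w ∈ T) ∧ w ∉ Subgroup.centralizer {x} := by
      by_cases haC : a ∈ Subgroup.centralizer {x}
      · by_cases hbC : b ∈ Subgroup.centralizer {x}
        · exact absurd (mul_mem haC hbC) hg
        · exact ⟨b, Or.inr hb, hbC⟩
      · exact ⟨a, Or.inl ha, haC⟩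
    obtain ⟨w, hwST, hwC⟩ := hw
    have hwCy : w ∉ Subgroup.centralizer {y} := hC ▸ hwC
    have cKw : Nat.card (commHom hc w).range ∣ p := cardK w hwST
    have hz1 : ⁅x, w⁆ ≠ 1 := by
      intro h
      exact hwC (Subgroup.mem_centralizer_singleton_iff.mpr
        (commutatorElement_eq_one_iff_mul_comm.mp h).symm)
    have hz2 : ⁅y, w⁆ ≠ 1 := by
      intro h
      exact hwCy (Subgroup.mem_centralizer_singleton_iff.mpr
        (commutatorElement_eq_one_iff_mul_comm.mp h).symm)
    have hzw1 : ⁅x, w⁆ ∈ (commHom hc w).range := by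
      have : ⁅w, x⁆ ∈ (commHom hc w).range := ⟨x, rfl⟩
      have h2 := (Subgroup.inv_mem_iff _).mpr this
      rwa [commutatorElement_inv] at h2
    have hzw2 : ⁅y, w⁆ ∈ (commHom hc w).range := by
      have : ⁅w, y⁆ ∈ (commHom hc w).range := ⟨y, rfl⟩
      have h2 := (Subgroup.inv_mem_iff _).mpr this
      rwa [commutatorElement_inv] at h2
    have e1 : Kx = (commHom hc w).range := sub_eq_of_common hp cKx cKw hz1 (memKx w) hzw1
    have e2 : Ky = (commHom hc w).range := sub_eq_of_common hp cKy cKw hz2 (memKy w) hzw2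
    exact hne (e1.trans e2.symm)
  · -- centralizers distinct, both of index p, hence neither contains the other
    have hcards : Nat.card (Subgroup.centralizer {x}) = Nat.card (Subgroup.centralizer {y}) := by
      have h1 := Subgroup.card_mul_index (Subgroup.centralizer {x} : Subgroup Q)
      have h2 := Subgroup.card_mul_index (Subgroup.centralizer {y} : Subgroup Q)
      rw [idxx] at h1; rw [idxy] at h2
      have := h1.trans h2.symm
      exact Nat.eq_of_mul_eq_mul_right hp.pos this
    have hnle1 : ¬ Subgroup.centralizer {x} ≤ Subgroup.centralizer {y} := by
      intro hle
      exact hC (Subgroup.eq_of_le_of_card_ge hle hcards.ge)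
    have hnle2 : ¬ Subgroup.centralizer {y} ≤ Subgroup.centralizer {x} := by
      intro hle
      exact hC ((Subgroup.eq_of_le_of_card_ge hle hcards.le).symm)
    obtain ⟨g, hg1, hg2⟩ := SetLike.not_le_iff_exists.mp hnle1
    obtain ⟨h, hh1, hh2⟩ := SetLike.not_le_iff_exists.mp hnle2
    have comm1 : ⁅x, g⁆ = 1 := commutatorElement_eq_one_iff_mul_comm.mpr
      (Subgroup.mem_centralizer_singleton_iff.mp hg1).symm
    have comm2 : ⁅y, h⁆ = 1 := commutatorElement_eq_one_iff_mul_comm.mpr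
      (Subgroup.mem_centralizer_singleton_iff.mp hh1).symm
    have ncomm1 : ⁅y, g⁆ ≠ 1 := fun hcm => hg2 (Subgroup.mem_centralizer_singleton_iff.mpr
      (commutatorElement_eq_one_iff_mul_comm.mp hcm).symm)
    have ncomm2 : ⁅x, h⁆ ≠ 1 := fun hcm => hh2 (Subgroup.mem_centralizer_singleton_iff.mpr
      (commutatorElement_eq_one_iff_mul_comm.mp hcm).symm)
    have exy_g : ⁅x * y, g⁆ = ⁅y, g⁆ := by rw [comm_mul_left hc, comm1, mul_one]
    have exy_h : ⁅x * y, h⁆ = ⁅x, h⁆ := by rw [comm_mul_left hc, comm2, one_mul]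
    have m1 : ⁅y, g⁆ ∈ Kxy := exy_g ▸ ⟨g, rfl⟩
    have m2 : ⁅x, h⁆ ∈ Kxy := exy_h ▸ ⟨h, rfl⟩
    have e1 : Ky = Kxy := sub_eq_of_common hp cKy cKxy ncomm1 (memKy g) m1
    have e2 : Kx = Kxy := sub_eq_of_common hp cKx cKxy ncomm2 (memKx h) m2
    exact hne (e2.trans e1.symm)

end Stmt14

namespace Stmt14

variable {Q : Type*} [Group Q]

lemma isCoatom_of_index_prime [Finite Q] {p : ℕ} (hp : p.Prime) {C : Subgroup Q}
    (hC : C.index = p) : IsCoatom C := by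
  constructor
  · intro h
    rw [h, Subgroup.index_top] at hC
    exact hp.one_lt.ne' hC.symm
  · intro K hK
    have hdvd : K.index ∣ p := hC ▸ Subgroup.index_dvd_of_le hK.le
    rcases (Nat.Prime.eq_one_or_self_of_dvd hp _ hdvd) with h | h
    · exact Subgroup.index_eq_one.mp h
    · exfalso
      have h1 := Subgroup.card_mul_index C
      have h2 := Subgroup.card_mul_index K
      rw [hC] at h1; rw [h] at h2
      have hcards : Nat.card C = Nat.card K :=
        Nat.eq_of_mul_eq_mul_right hp.pos (h1.trans h2.symm)
      exact hK.ne (Subgroup.eq_of_le_of_card_ge hK.le hcards.ge)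

/-- every maximal subgroup of a finite p-group contains the commutator subgroup -/
lemma commutator_le_coatom [Finite Q] {p : ℕ} (hp : p.Prime) (hQ : IsPGroup p Q)
    {M : Subgroup Q} (hM : IsCoatom M) : commutator Q ≤ M := by
  haveI : Fact p.Prime := ⟨hp⟩
  haveI hnil : Group.IsNilpotent Q := hQ.isNilpotent
  haveI hnorm : M.Normal :=
    Subgroup.NormalizerCondition.normal_of_coatom M normalizerCondition_of_isNilpotent hM
  -- find g ∉ M
  obtain ⟨g, hg⟩ : ∃ g : Q, g ∉ M := by
    by_contra h
    push_neg at h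
    exact hM.1 ((Subgroup.eq_top_iff' _).mpr h)
  set π := QuotientGroup.mk' M with hπ
  -- the cyclic subgroup generated by π g pulls back to ⊤
  have hcomap : Subgroup.comap π (Subgroup.zpowers (π g)) = ⊤ := by
    have hle : M ≤ Subgroup.comap π (Subgroup.zpowers (π g)) := by
      intro m hm
      have : π m = 1 := (QuotientGroup.eq_one_iff m).mpr hm
      simp only [Subgroup.mem_comap, this]
      exact Subgroup.one_mem _
    by_cases heq : M = Subgroup.comap π (Subgroup.zpowers (π g))
    · exfalso
      have : g ∈ Subgroup.comap π (Subgroup.zpowers (π g)) := by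
        simp [Subgroup.mem_comap, Subgroup.mem_zpowers]
      exact hg (heq ▸ this)
    · exact hM.2 _ (lt_of_le_of_ne hle heq)
  have hall : ∀ q : Q ⧸ M, q ∈ Subgroup.zpowers (π g) := by
    intro q
    obtain ⟨x, rfl⟩ := QuotientGroup.mk'_surjective M q
    have : x ∈ Subgroup.comap π (Subgroup.zpowers (π g)) := hcomap ▸ Subgroup.mem_top x
    exact this
  -- quotient is abelian
  have habel : ∀ a b : Q ⧸ M, a * b = b * a := by
    intro a b
    obtain ⟨m, hm⟩ := Subgroup.mem_zpowers_iff.mp (hall a)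
    obtain ⟨n, hn⟩ := Subgroup.mem_zpowers_iff.mp (hall b)
    rw [← hm, ← hn, ← zpow_add, ← zpow_add, add_comm]
  rw [_root_.commutator_def, Subgroup.commutator_le]
  intro a _ b _
  have : π ⁅a, b⁆ = 1 := by
    rw [map_commutatorElement]
    exact commutatorElement_eq_one_iff_mul_comm.mpr (habel (π a) (π b))
  exact (QuotientGroup.eq_one_iff _).mp this

lemma commutator_le_frattini_pgroup [Finite Q] {p : ℕ} (hp : p.Prime) (hQ : IsPGroup p Q) :
    commutator Q ≤ frattini Q := by
  rw [frattini, Order.radical]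
  exact le_iInf fun M => le_iInf fun hM => commutator_le_coatom hp hQ hM

end Stmt14

namespace Stmt14

variable {Q : Type*} [Group Q]

lemma exists_bound [Finite Q] {p : ℕ} (hp : p.Prime) (hc : commutator Q ≤ Subgroup.center Q)
    {S T : Subgroup Q} (hfac : ∀ g : Q, ∃ a ∈ S, ∃ b ∈ T, g = a * b)
    (hidx : ∀ x : Q, (x ∈ S ∨ x ∈ T) → (Subgroup.centralizer {x}).index ∣ p)
    {R : Subgroup Q} (hR : R = S ∨ R = T) :
    ∃ U : Subgroup Q, U ≤ Subgroup.center Q ∧ Nat.card U ∣ p ∧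
      ∀ x ∈ R, ∀ g : Q, ⁅x, g⁆ ∈ U := by
  by_cases hex : ∃ x ∈ R, (commHom hc x).range ≠ ⊥
  · obtain ⟨x₀, hx₀, hne⟩ := hex
    have hmem : x₀ ∈ S ∨ x₀ ∈ T := by
      rcases hR with h | h
      · exact Or.inl (h ▸ hx₀)
      · exact Or.inr (h ▸ hx₀)
    refine ⟨(commHom hc x₀).range, range_commHom_le_center hc x₀,
      (card_range_commHom hc x₀) ▸ hidx x₀ hmem, ?_⟩
    intro x hx g
    by_cases hbot : (commHom hc x).range = ⊥
    · have : ⁅x, g⁆ ∈ (commHom hc x).range := ⟨g, rfl⟩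
      rw [hbot] at this
      rw [Subgroup.mem_bot] at this
      rw [this]
      exact Subgroup.one_mem _
    · have heq := K_eq_K hp hc hfac hidx hR hx hx₀ hbot hne
      exact heq ▸ ⟨g, rfl⟩
  · push_neg at hex
    refine ⟨⊥, bot_le, by simp, ?_⟩
    intro x hx g
    have : ⁅x, g⁆ ∈ (commHom hc x).range := ⟨g, rfl⟩
    rwa [hex x hx] at this

theorem main_pgroup [Finite Q] {p : ℕ} (hp : p.Prime) (hQ : IsPGroup p Q)
    {S T : Subgroup Q} (hfac : ∀ g : Q, ∃ a ∈ S, ∃ b ∈ T, g = a * b)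
    (hidx : ∀ x : Q, (x ∈ S ∨ x ∈ T) → (Subgroup.centralizer {x}).index ∣ p) :
    commutator Q ≤ frattini Q ∧ frattini Q ≤ Subgroup.center Q ∧
      (∀ a b : ↥(commutator Q), a * b = b * a) ∧
      (∀ a : ↥(commutator Q), a ≠ 1 → orderOf a = p) ∧
      Nat.card ↥(commutator Q) ≤ p ^ 2 := by
  -- part 1: commutator ≤ frattini
  have part1 : commutator Q ≤ frattini Q := commutator_le_frattini_pgroup hp hQ
  -- part 2 : frattini ≤ center
  have hfr : ∀ x : Q, (x ∈ S ∨ x ∈ T) → frattini Q ≤ Subgroup.centralizer {x} := by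
    intro x hx
    rcases (Nat.Prime.eq_one_or_self_of_dvd hp _ (hidx x hx)) with h | h
    · rw [Subgroup.index_eq_one.mp h]
      exact le_top
    · exact frattini_le_coatom (isCoatom_of_index_prime hp h)
  have part2 : frattini Q ≤ Subgroup.center Q := by
    intro z hz
    rw [Subgroup.mem_center_iff]
    intro g
    obtain ⟨a, ha, b, hb, rfl⟩ := hfac g
    have hza : z * a = a * z :=
      Subgroup.mem_centralizer_singleton_iff.mp (hfr a (Or.inl ha) hz)
    have hzb : z * b = b * z :=
      Subgroup.mem_centralizer_singleton_iff.mp (hfr b (Or.inr hb) hz)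
    calc a * b * z = a * (b * z) := by group
      _ = a * (z * b) := by rw [hzb]
      _ = (a * z) * b := by group
      _ = z * (a * b) := by rw [← hza]; group
  have hc : commutator Q ≤ Subgroup.center Q := part1.trans part2
  -- bounding subgroups
  obtain ⟨U, hUc, hUcard, hUmem⟩ := exists_bound hp hc hfac hidx (Or.inl rfl)
  obtain ⟨V, hVc, hVcard, hVmem⟩ := exists_bound hp hc hfac hidx (Or.inr rfl)
  have hUnormal : U.Normal := by
    constructor
    intro u hu g
    have : g * u = u * g := (Subgroup.mem_center_iff.mp (hUc hu) g)
    rw [this, mul_assoc, mul_inv_cancel, mul_one]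
    exact hu
  have hVnormal : V.Normal := by
    constructor
    intro u hu g
    have : g * u = u * g := (Subgroup.mem_center_iff.mp (hVc hu) g)
    rw [this, mul_assoc, mul_inv_cancel, mul_one]
    exact hu
  -- commutator ≤ U ⊔ V
  have hcomm_le : commutator Q ≤ U ⊔ V := by
    rw [_root_.commutator_def, Subgroup.commutator_le]
    intro g₁ _ g₂ _
    obtain ⟨a, ha, b, hb, rfl⟩ := hfac g₁
    rw [comm_mul_left hc]
    exact mul_mem (Subgroup.mem_sup_right (hVmem b hb g₂)) (Subgroup.mem_sup_left (hUmem a ha g₂))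
  -- every element of U ⊔ V : decomposition and p-th power trivial
  have hdecomp : ∀ w ∈ U ⊔ V, ∃ u ∈ U, ∃ v ∈ V, w = u * v := by
    intro w hw
    have : w ∈ (↑(U ⊔ V) : Set Q) := hw
    rw [Subgroup.mul_normal U V] at this
    obtain ⟨u, hu, v, hv, huv⟩ := this
    exact ⟨u, hu, v, hv, huv.symm⟩
  have hpow : ∀ w ∈ U ⊔ V, w ^ p = 1 := by
    intro w hw
    obtain ⟨u, hu, v, hv, rfl⟩ := hdecomp w hw
    have hup : u ^ p = 1 := by
      have h1 : orderOf (⟨u, hu⟩ : U) ∣ Nat.card U := orderOf_dvd_natCard _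
      rw [← Subgroup.orderOf_coe (⟨u, hu⟩ : U)] at h1
      exact orderOf_dvd_iff_pow_eq_one.mp (h1.trans hUcard)
    have hvp : v ^ p = 1 := by
      have h1 : orderOf (⟨v, hv⟩ : V) ∣ Nat.card V := orderOf_dvd_natCard _
      rw [← Subgroup.orderOf_coe (⟨v, hv⟩ : V)] at h1
      exact orderOf_dvd_iff_pow_eq_one.mp (h1.trans hVcard)
    have hcomm : Commute u v := by
      have h := Subgroup.mem_center_iff.mp (hUc hu) v
      exact h.symm
    rw [hcomm.mul_pow, hup, hvp, one_mul]
  -- cardinality bound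
  have hcard_sup : Nat.card ↥(U ⊔ V) ≤ p ^ 2 := by
    have hsurj : Function.Surjective (fun uv : U × V =>
        (⟨uv.1 * uv.2, mul_mem (Subgroup.mem_sup_left uv.1.2) (Subgroup.mem_sup_right uv.2.2)⟩ : ↥(U ⊔ V))) := by
      rintro ⟨w, hw⟩
      obtain ⟨u, hu, v, hv, rfl⟩ := hdecomp w hw
      exact ⟨(⟨u, hu⟩, ⟨v, hv⟩), rfl⟩
    have h1 := Nat.card_le_card_of_surjective _ hsurj
    have h2 : Nat.card (U × V) = Nat.card U * Nat.card V := Nat.card_prod _ _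
    have h3 : Nat.card U ≤ p := Nat.le_of_dvd hp.pos hUcard
    have h4 : Nat.card V ≤ p := Nat.le_of_dvd hp.pos hVcard
    calc Nat.card ↥(U ⊔ V) ≤ Nat.card U * Nat.card V := h2 ▸ h1
      _ ≤ p * p := Nat.mul_le_mul h3 h4
      _ = p ^ 2 := (sq p).symm
  refine ⟨part1, part2, ?_, ?_, ?_⟩
  · intro a b
    have : (a : Q) * b = b * a := (Subgroup.mem_center_iff.mp (hc a.2) b).symm
    exact Subtype.ext (by push_cast; exact this)
  · intro a ha
    have hmem : (a : Q) ∈ U ⊔ V := hcomm_le a.2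
    have hpa : (a : Q) ^ p = 1 := hpow _ hmem
    have hdvd : orderOf a ∣ p := by
      rw [← Subgroup.orderOf_coe a]
      exact orderOf_dvd_iff_pow_eq_one.mpr hpa
    rcases (Nat.Prime.eq_one_or_self_of_dvd hp _ hdvd) with h | h
    · exact absurd (orderOf_eq_one_iff.mp h) ha
    · exact h
  · calc Nat.card ↥(commutator Q) ≤ Nat.card ↥(U ⊔ V) := Subgroup.card_le_of_le hcomm_le
      _ ≤ p ^ 2 := hcard_sup

end Stmt14

namespace Stmt14

lemma centralizer_index_dvd_of_surjective {G Q' : Type*} [Group G] [Group Q']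
    (f : G →* Q') (hf : Function.Surjective f) (c : G) :
    (Subgroup.centralizer {f c}).index ∣ (Subgroup.centralizer {c}).index := by
  rw [← Subgroup.index_comap_of_surjective _ hf]
  apply Subgroup.index_dvd_of_le
  intro g hg
  rw [Subgroup.mem_comap, Subgroup.mem_centralizer_singleton_iff, ← map_mul, ← map_mul,
    Subgroup.mem_centralizer_singleton_iff.mp hg]

lemma centralizer_index_eq_of_bijective {Q1 Q2 : Type*} [Group Q1] [Group Q2]
    (f : Q1 →* Q2) (hf : Function.Bijective f) (x : Q1) :
    (Subgroup.centralizer {x}).index = (Subgroup.centralizer {f x}).index := by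
  rw [← Subgroup.index_comap_of_surjective _ hf.2]
  congr 1
  ext g
  simp only [Subgroup.mem_comap, Subgroup.mem_centralizer_singleton_iff]
  constructor
  · intro h
    rw [← map_mul, ← map_mul, h]
  · intro h
    apply hf.1
    rw [map_mul, map_mul, h]

lemma exists_p_elem {G Q' : Type*} [Group G] [Finite G] [Group Q'] [Finite Q'] {p : ℕ}
    (hp : p.Prime) (f : G →* Q') (hQ' : IsPGroup p Q') (a : G) :
    ∃ m : ℕ, (∃ k, orderOf (a ^ m) = p ^ k) ∧ f a ∈ Subgroup.zpowers (f (a ^ m)) := by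
  haveI : Fact p.Prime := ⟨hp⟩
  set ord := orderOf a with hord
  have hord0 : ord ≠ 0 := (orderOf_pos a).ne'
  set k := ord.factorization p with hk
  set m := ord / p ^ k with hm
  have hmul : p ^ k * m = ord := Nat.ordProj_mul_ordCompl_eq_self ord p
  have hm0 : m ≠ 0 := by
    intro h
    rw [h, mul_zero] at hmul
    exact hord0 hmul.symm
  have hpm : ¬ p ∣ m := Nat.not_dvd_ordCompl hp hord0
  have hmdvd : m ∣ ord := Dvd.intro_left _ hmul
  refine ⟨m, ⟨k, ?_⟩, ?_⟩
  · rw [orderOf_pow' a hm0, Nat.gcd_eq_right hmdvd, ← hord, ← hmul, Nat.mul_div_cancel _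
      (Nat.pos_of_ne_zero hm0)]
  · -- f a ∈ zpowers ((f a) ^ m)
    rw [map_pow]
    obtain ⟨j, hj⟩ := IsPGroup.iff_orderOf.mp hQ' (f a)
    have hcop : Nat.Coprime (orderOf (f a)) m := by
      rw [hj]
      exact (Nat.Prime.coprime_iff_not_dvd hp).mpr hpm |>.pow_left j
    have hord_eq : orderOf ((f a) ^ m) = orderOf (f a) := by
      rw [orderOf_pow' _ hm0, Nat.Coprime.gcd_eq_one hcop, Nat.div_one]
    have hle : Subgroup.zpowers ((f a) ^ m) ≤ Subgroup.zpowers (f a) :=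
      Subgroup.zpowers_le.mpr (Subgroup.mem_zpowers_iff.mpr ⟨(m : ℤ), by rw [zpow_natCast]⟩)
    have hcards : Nat.card (Subgroup.zpowers (f a)) ≤ Nat.card (Subgroup.zpowers ((f a) ^ m)) := by
      rw [Nat.card_zpowers, Nat.card_zpowers, hord_eq]
    have := Subgroup.eq_of_le_of_card_ge hle hcards
    rw [this]
    exact Subgroup.mem_zpowers _

end Stmt14

/-- For a `p`-nilpotent factorised group whose `p`-elements in the factors
have class size not divisible by `p ^ 2`, a Sylow `p`-subgroup `P` satisfies
`P' ≤ Φ(P) ≤ Z(P)` with `P'` elementary abelian of order at most `p ^ 2`. -/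
theorem stmt_14 {G : Type*} [Group G] [Finite G] (A B : Subgroup G)
    (hfact : IsFactorization A B)
    (p : ℕ) (hp : p.Prime) (hnil : IsPNilpotent p G)
    (hclass : ∀ x : G, (x ∈ A ∨ x ∈ B) → (∃ n : ℕ, orderOf x = p ^ n) →
      ¬ p ^ 2 ∣ classSize x) :
    ∀ P : Sylow p G,
      commutator ↥(P : Subgroup G) ≤ frattini ↥(P : Subgroup G) ∧
      frattini ↥(P : Subgroup G) ≤ Subgroup.center ↥(P : Subgroup G) ∧
      IsElementaryAbelian p ↥(commutator ↥(P : Subgroup G)) ∧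
      Nat.card ↥(commutator ↥(P : Subgroup G)) ≤ p ^ 2 := by
  obtain ⟨H, hHnorm, hHp', n, hHidx⟩ := hnil
  intro P
  haveI : Fact p.Prime := ⟨hp⟩
  set π := QuotientGroup.mk' H with hπdef
  have hπsurj : Function.Surjective π := QuotientGroup.mk'_surjective H
  have hcardQ : Nat.card (G ⧸ H) = p ^ n := by
    rw [← hHidx]; exact (Subgroup.index_eq_card H).symm
  have hQp : IsPGroup p (G ⧸ H) := IsPGroup.of_card hcardQ
  set ψ := π.comp (P : Subgroup G).subtype with hψdef
  have hψq : ∀ q : ↥(P : Subgroup G), ψ q = π (↑q : G) := fun q => rfl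
  have hψinj : Function.Injective ψ := by
    rw [injective_iff_map_eq_one]
    intro a ha
    have hmem : (↑a : G) ∈ H := (QuotientGroup.eq_one_iff _).mp ha
    obtain ⟨k, hk⟩ := IsPGroup.iff_orderOf.mp P.2 a
    have h1 : orderOf (↑a : G) = p ^ k := (Subgroup.orderOf_coe a).trans hk
    have h2 : orderOf (⟨↑a, hmem⟩ : H) ∣ Nat.card H := orderOf_dvd_natCard _
    rw [Subgroup.orderOf_mk, h1] at h2
    have hk0 : k = 0 := by
      by_contra hk0
      exact hHp' (dvd_trans (dvd_pow_self p hk0) h2)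
    rw [hk0, pow_zero] at h1
    exact Subtype.ext (orderOf_eq_one_iff.mp h1)
  have hcardP : Nat.card ↥(P : Subgroup G) = p ^ n := by
    rw [Sylow.card_eq_multiplicity P]
    congr 1
    have hG : Nat.card H * H.index = Nat.card G := Subgroup.card_mul_index H
    have hH0 : Nat.card H ≠ 0 := Nat.card_pos.ne'
    rw [← hG, hHidx, Nat.factorization_mul hH0 (pow_ne_zero n hp.pos.ne'),
      Finsupp.add_apply, Nat.factorization_eq_zero_of_not_dvd hHp',
      hp.factorization_pow, Finsupp.single_eq_same, zero_add]
  have hψbij : Function.Bijective ψ :=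
    (Nat.bijective_iff_injective_and_card ψ).mpr ⟨hψinj, by rw [hcardP, hcardQ]⟩
  set S := Subgroup.comap ψ (A.map π) with hSdef
  set T := Subgroup.comap ψ (B.map π) with hTdef
  have hfacP : ∀ q : ↥(P : Subgroup G), ∃ s ∈ S, ∃ t ∈ T, q = s * t := by
    intro q
    obtain ⟨a, ha, b, hb, hab⟩ := hfact (↑q : G)
    obtain ⟨s, hs⟩ := hψbij.2 (π a)
    obtain ⟨t, ht⟩ := hψbij.2 (π b)
    refine ⟨s, ?_, t, ?_, ?_⟩
    · rw [hSdef, Subgroup.mem_comap, hs]; exact ⟨a, ha, rfl⟩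
    · rw [hTdef, Subgroup.mem_comap, ht]; exact ⟨b, hb, rfl⟩
    · apply hψinj
      rw [map_mul, hs, ht, hψq, hab, map_mul]
  have hidxP : ∀ x : ↥(P : Subgroup G), (x ∈ S ∨ x ∈ T) →
      (Subgroup.centralizer {x}).index ∣ p := by
    intro x hx
    have hgen : ∃ w : G, (w ∈ A ∨ w ∈ B) ∧ π w = ψ x := by
      rcases hx with h | h
      · obtain ⟨a, ha, haa⟩ := Subgroup.mem_map.mp (Subgroup.mem_comap.mp h)
        exact ⟨a, Or.inl ha, haa⟩
      · obtain ⟨b, hb, hbb⟩ := Subgroup.mem_map.mp (Subgroup.mem_comap.mp h)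
        exact ⟨b, Or.inr hb, hbb⟩
    obtain ⟨w, hw, hwx⟩ := hgen
    obtain ⟨m, ⟨k, hk⟩, hzpow⟩ := Stmt14.exists_p_elem hp π hQp w
    have hwm : w ^ m ∈ A ∨ w ^ m ∈ B := by
      rcases hw with h | h
      · exact Or.inl (pow_mem h m)
      · exact Or.inr (pow_mem h m)
    have hclass' : ¬ p ^ 2 ∣ (Subgroup.centralizer {w ^ m}).index :=
      hclass (w ^ m) hwm ⟨k, hk⟩
    have e1 : (Subgroup.centralizer {x}).index = (Subgroup.centralizer {ψ x}).index :=
      Stmt14.centralizer_index_eq_of_bijective ψ hψbij x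
    have e2 : Subgroup.centralizer {π (w ^ m)} ≤ Subgroup.centralizer {π w} := by
      intro y hy
      rw [Subgroup.mem_centralizer_singleton_iff] at hy ⊢
      obtain ⟨t, ht⟩ := Subgroup.mem_zpowers_iff.mp hzpow
      rw [← ht]
      exact (Commute.zpow_right hy t)
    have e3 : (Subgroup.centralizer {π w}).index ∣
        (Subgroup.centralizer {π (w ^ m)}).index := Subgroup.index_dvd_of_le e2
    have e4 : (Subgroup.centralizer {π (w ^ m)}).index ∣
        (Subgroup.centralizer {w ^ m}).index :=
      Stmt14.centralizer_index_dvd_of_surjective π hπsurj _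
    have e5 : (Subgroup.centralizer {x}).index ∣ (Subgroup.centralizer {w ^ m}).index := by
      rw [e1, ← hwx]
      exact e3.trans e4
    have e6 : (Subgroup.centralizer {x}).index ∣ p ^ n := by
      have h := Subgroup.index_dvd_card (Subgroup.centralizer {x})
      rwa [hcardP] at h
    obtain ⟨j, hjn, hj⟩ := (Nat.dvd_prime_pow hp).mp e6
    rw [hj]
    have hj1 : j ≤ 1 := by
      by_contra hj2
      push_neg at hj2
      exact hclass' (dvd_trans (pow_dvd_pow p hj2) (hj ▸ e5))
    calc p ^ j ∣ p ^ 1 := pow_dvd_pow p hj1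
      _ = p := pow_one p
  obtain ⟨h1, h2, h3, h4, h5⟩ := Stmt14.main_pgroup hp P.2 hfacP hidxP
  exact ⟨h1, h2, ⟨h3, h4⟩, h5⟩
end
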